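/- arXiv:2107.09137 — 2 statements merged into one kernel-verified Lean document; each statement's English description precedes it below -/
import Mathlib

section
/- Let W11 e1 = λ1 e1 with λ1 > 0, and suppose the operator norm of W22 is strictly less than λ1. Then as m → ∞, the vector (1/λ1^m) * W21^(m) e1 converges to the sum of the convergent series Σ_{k=0}^∞ (1/λ1) * (W22/λ1)^k * (W21 e1). -/
set_option maxHeartbeats 1000000


open Matrix Finset Filter Topology

attribute [local instance] Matrix.linftyOpNormedAddCommGroup Matrix.linftyOpNormedRing

/-- Auxiliary: explicit bottom-left block of powers. -/
def auxC {n1 n2 : ℕ} (W11 : Matrix (Fin n1) (Fin n1) ℝ)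
    (W22 : Matrix (Fin n2) (Fin n2) ℝ) (W21 : Matrix (Fin n2) (Fin n1) ℝ) :
    ℕ → Matrix (Fin n2) (Fin n1) ℝ
  | 0 => 0
  | m + 1 => auxC W11 W22 W21 m * W11 + W22 ^ m * W21

lemma pow_fromBlocks_eq {n1 n2 : ℕ} (W11 : Matrix (Fin n1) (Fin n1) ℝ)
    (W22 : Matrix (Fin n2) (Fin n2) ℝ) (W21 : Matrix (Fin n2) (Fin n1) ℝ) (m : ℕ) :
    (Matrix.fromBlocks W11 0 W21 W22) ^ m =
      Matrix.fromBlocks (W11 ^ m) 0 (auxC W11 W22 W21 m) (W22 ^ m) := by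
  induction m with
  | zero => simp [auxC, Matrix.fromBlocks_one]
  | succ m ih =>
    rw [pow_succ, ih, Matrix.fromBlocks_multiply]
    simp [auxC, pow_succ]

/-- Convergence of the normalized bottom-left block applied to the dominant eigenvector. -/
theorem stmt_3 {n1 n2 : ℕ} (W11 : Matrix (Fin n1) (Fin n1) ℝ)
    (W22 : Matrix (Fin n2) (Fin n2) ℝ) (W21 : Matrix (Fin n2) (Fin n1) ℝ)
    (e1 : Fin n1 → ℝ) (lam1 : ℝ) (hpos : 0 < lam1)
    (heig : W11.mulVec e1 = lam1 • e1) (hnorm : ‖W22‖ < lam1) :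
    Tendsto
      (fun m : ℕ =>
        (1 / lam1 ^ m) • (Matrix.toBlocks₂₁ ((Matrix.fromBlocks W11 0 W21 W22) ^ m)).mulVec e1)
      atTop
      (𝓝 (∑' k : ℕ, ((1 / lam1) • ((1 / lam1) • W22) ^ k).mulVec (W21.mulVec e1))) := by
  set u : Fin n2 → ℝ := W21.mulVec e1 with hu
  set f : ℕ → Fin n2 → ℝ := fun k => ((1 / lam1) • ((1 / lam1) • W22) ^ k).mulVec u with hf
  -- rewrite each term of f
  have hf' : ∀ k, f k = (1 / lam1) ^ (k + 1) • (W22 ^ k).mulVec u := by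
    intro k
    simp only [hf, smul_pow, Matrix.smul_mulVec, smul_smul, pow_succ]
    ring_nf
  -- norm bound on W22^k *ᵥ u
  have hbound : ∀ k, ‖(W22 ^ k).mulVec u‖ ≤ ‖W22‖ ^ k * ‖u‖ := by
    intro k
    induction k with
    | zero => simp
    | succ k ih =>
      rw [pow_succ', ← Matrix.mulVec_mulVec]
      calc ‖W22.mulVec ((W22 ^ k).mulVec u)‖ ≤ ‖W22‖ * ‖(W22 ^ k).mulVec u‖ :=
            Matrix.linfty_opNorm_mulVec _ _
        _ ≤ ‖W22‖ * (‖W22‖ ^ k * ‖u‖) := by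
            exact mul_le_mul_of_nonneg_left ih (norm_nonneg _)
        _ = ‖W22‖ ^ (k + 1) * ‖u‖ := by ring
  -- summability of f
  have hsum : Summable f := by
    have hr : ‖W22‖ / lam1 < 1 := (div_lt_one hpos).2 hnorm
    have hr0 : 0 ≤ ‖W22‖ / lam1 := div_nonneg (norm_nonneg _) hpos.le
    have hle : ∀ k, ‖f k‖ ≤ (‖W22‖ / lam1) ^ k * (‖u‖ / lam1) := by
      intro k
      rw [hf', norm_smul]
      have h1 : ‖(1 / lam1 : ℝ) ^ (k + 1)‖ = (1 / lam1) ^ (k + 1) := by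
        rw [Real.norm_eq_abs, abs_pow, abs_of_pos (by positivity)]
      rw [h1]
      calc (1 / lam1) ^ (k + 1) * ‖(W22 ^ k).mulVec u‖
          ≤ (1 / lam1) ^ (k + 1) * (‖W22‖ ^ k * ‖u‖) := by
            have hp : (0:ℝ) ≤ (1 / lam1) ^ (k + 1) := by positivity
            exact mul_le_mul_of_nonneg_left (hbound k) hp
        _ = (‖W22‖ / lam1) ^ k * (‖u‖ / lam1) := by
            rw [pow_succ, div_pow, div_pow, one_pow]
            field_simp
    have hg : Summable (fun k : ℕ => (‖W22‖ / lam1) ^ k * (‖u‖ / lam1)) :=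
      (summable_geometric_of_lt_one hr0 hr).mul_right _
    exact Summable.of_norm (Summable.of_nonneg_of_le (fun k => norm_nonneg _) hle hg)
  -- the sequence equals partial sums of f
  have hkey : ∀ m : ℕ,
      (1 / lam1 ^ m) • (Matrix.toBlocks₂₁ ((Matrix.fromBlocks W11 0 W21 W22) ^ m)).mulVec e1
        = ∑ k ∈ Finset.range m, f k := by
    intro m
    rw [pow_fromBlocks_eq, Matrix.toBlocks_fromBlocks₂₁]
    induction m with
    | zero => simp [auxC]
    | succ m ih =>
      rw [Finset.sum_range_succ, ← ih]
      simp only [auxC, Matrix.add_mulVec, ← Matrix.mulVec_mulVec, heig,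
        Matrix.mulVec_smul, smul_add, hf']
      have h2 : (1 / lam1 ^ (m + 1) * lam1 : ℝ) = 1 / lam1 ^ m := by
        field_simp
        ring
      have h3 : (1 / lam1 ^ (m + 1) : ℝ) = (1 / lam1) ^ (m + 1) := by
        rw [div_pow, one_pow]
      rw [smul_smul, h2, h3, hu]
  have := (hsum.hasSum).tendsto_sum_nat
  rw [tendsto_congr hkey]
  exact this
end

section
/- For the block lower triangular matrix M = [[W11,0],[W21,W22]] with W11 e1 = λ1 e1, λ1 > ‖W22‖, λ1 > 0: the limit of (M/λ1)^m applied to the concatenated vector (e1, e2) exists for any e2, and equals (e1', r) where the top block is e1 (since W11^m e1/λ1^m = e1) and the bottom block is r = Σ_{k=0}^∞ λ1^{-(k+1)} W22^k W21 e1. -/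
open Matrix Filter Topology

attribute [local instance] Matrix.linftyOpNormedAddCommGroup Matrix.linftyOpNormedRing

/-- `(M/λ1)^m (e1, e2)` converges to `(e1, r)` with `r` the Neumann series sum. -/
theorem stmt_19 {n1 n2 : ℕ} (W11 : Matrix (Fin n1) (Fin n1) ℝ)
    (W22 : Matrix (Fin n2) (Fin n2) ℝ) (W21 : Matrix (Fin n2) (Fin n1) ℝ)
    (e1 : Fin n1 → ℝ) (e2 : Fin n2 → ℝ) (lam1 : ℝ) (hpos : 0 < lam1)
    (heig : W11.mulVec e1 = lam1 • e1) (hnorm : ‖W22‖ < lam1) :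
    Tendsto
      (fun m : ℕ => ((lam1⁻¹ • Matrix.fromBlocks W11 0 W21 W22) ^ m).mulVec (Sum.elim e1 e2))
      atTop
      (𝓝 (Sum.elim e1 (∑' k : ℕ, lam1⁻¹ ^ (k + 1) • (W22 ^ k).mulVec (W21.mulVec e1)))) := by
  set f : ℕ → Fin n2 → ℝ := fun k => lam1⁻¹ ^ (k + 1) • (W22 ^ k).mulVec (W21.mulVec e1)
    with hf
  have smul_elim : ∀ (c : ℝ) (x : Fin n1 → ℝ) (y : Fin n2 → ℝ),
      c • Sum.elim x y = Sum.elim (c • x) (c • y) := by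
    intro c x y; funext i; cases i <;> rfl
  -- key formula by induction
  have key : ∀ m : ℕ,
      ((lam1⁻¹ • Matrix.fromBlocks W11 0 W21 W22) ^ m).mulVec (Sum.elim e1 e2) =
      Sum.elim e1 ((∑ k ∈ Finset.range m, f k) + ((lam1⁻¹ • W22) ^ m).mulVec e2) := by
    intro m
    induction m with
    | zero => simp
    | succ m ih =>
      rw [pow_succ', ← Matrix.mulVec_mulVec, ih, Matrix.smul_mulVec,
        Matrix.fromBlocks_mulVec, Sum.elim_comp_inl, Sum.elim_comp_inr, smul_elim]
      have htop : lam1⁻¹ • (W11 *ᵥ e1 + 0 *ᵥ (∑ k ∈ Finset.range m, f k +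
          (lam1⁻¹ • W22) ^ m *ᵥ e2)) = e1 := by
        rw [heig]
        simp [smul_smul, inv_mul_cancel₀ hpos.ne']
      rw [htop]
      refine congrArg (Sum.elim e1) ?_
      have h0 : f 0 = lam1⁻¹ • W21.mulVec e1 := by simp [hf]
      have hshift : ∀ k, f (k + 1) = lam1⁻¹ • W22.mulVec (f k) := by
        intro k
        have hp : (W22 ^ (k + 1)).mulVec (W21.mulVec e1) =
            W22.mulVec ((W22 ^ k).mulVec (W21.mulVec e1)) := by
          rw [pow_succ', ← Matrix.mulVec_mulVec]
        rw [hf]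
        simp only [hp, Matrix.mulVec_smul, smul_smul, ← pow_succ']
      have hdist : W22 *ᵥ (∑ k ∈ Finset.range m, f k) =
          ∑ k ∈ Finset.range m, W22 *ᵥ f k := by
        exact Matrix.mulVec_sum _ _ _
      rw [Finset.sum_range_succ']
      simp only [hshift, h0, ← Finset.smul_sum, ← hdist]
      rw [pow_succ', ← Matrix.mulVec_mulVec, Matrix.smul_mulVec,
        Matrix.mulVec_add, smul_add]
      simp only [smul_add]
      abel
  -- summability
  have hq : lam1⁻¹ * ‖W22‖ < 1 := by
    rw [inv_mul_lt_one₀ hpos]; exact hnorm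
  have hqnn : (0:ℝ) ≤ lam1⁻¹ * ‖W22‖ :=
    mul_nonneg (inv_nonneg.2 hpos.le) (norm_nonneg _)
  have hpowv : ∀ (k : ℕ) (v : Fin n2 → ℝ), ‖(W22 ^ k).mulVec v‖ ≤ ‖W22‖ ^ k * ‖v‖ := by
    intro k v
    induction k with
    | zero => simp
    | succ k ih =>
      rw [pow_succ', ← Matrix.mulVec_mulVec]
      calc ‖W22.mulVec ((W22 ^ k).mulVec v)‖ ≤ ‖W22‖ * ‖(W22 ^ k).mulVec v‖ :=
            Matrix.linfty_opNorm_mulVec _ _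
        _ ≤ ‖W22‖ * (‖W22‖ ^ k * ‖v‖) :=
            mul_le_mul_of_nonneg_left ih (norm_nonneg _)
        _ = ‖W22‖ ^ (k + 1) * ‖v‖ := by ring
  have hbound : ∀ k, ‖f k‖ ≤ lam1⁻¹ * ((lam1⁻¹ * ‖W22‖) ^ k * ‖W21.mulVec e1‖) := by
    intro k
    rw [hf]
    simp only
    rw [norm_smul, norm_pow, Real.norm_of_nonneg (inv_nonneg.2 hpos.le)]
    calc lam1⁻¹ ^ (k + 1) * ‖(W22 ^ k).mulVec (W21.mulVec e1)‖
        ≤ lam1⁻¹ ^ (k + 1) * (‖W22‖ ^ k * ‖W21.mulVec e1‖) :=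
          mul_le_mul_of_nonneg_left (hpowv _ _) (pow_nonneg (inv_nonneg.2 hpos.le) _)
      _ = lam1⁻¹ * ((lam1⁻¹ * ‖W22‖) ^ k * ‖W21.mulVec e1‖) := by
          rw [mul_pow, pow_succ']; ring
  have hsummable : Summable f :=
    Summable.of_norm_bounded (((summable_geometric_of_lt_one hqnn hq).mul_right
      ‖W21.mulVec e1‖).mul_left lam1⁻¹) hbound
  -- partial sums converge
  have hsum : Tendsto (fun m => ∑ k ∈ Finset.range m, f k) atTop (𝓝 (∑' k, f k)) :=
    hsummable.hasSum.tendsto_sum_nat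
  -- the remainder tends to 0
  have hrem : Tendsto (fun m : ℕ => ((lam1⁻¹ • W22) ^ m).mulVec e2) atTop (𝓝 0) := by
    have h1 : Tendsto (fun m : ℕ => (lam1⁻¹ * ‖W22‖) ^ m * ‖e2‖) atTop (𝓝 0) := by
      simpa using (tendsto_pow_atTop_nhds_zero_of_lt_one hqnn hq).mul_const ‖e2‖
    apply squeeze_zero_norm _ h1
    intro m
    rw [smul_pow, Matrix.smul_mulVec, norm_smul, norm_pow, norm_inv,
      Real.norm_of_nonneg hpos.le, mul_pow]
    calc lam1⁻¹ ^ m * ‖(W22 ^ m).mulVec e2‖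
        ≤ lam1⁻¹ ^ m * (‖W22‖ ^ m * ‖e2‖) :=
          mul_le_mul_of_nonneg_left (hpowv _ _) (pow_nonneg (inv_nonneg.2 hpos.le) _)
      _ = lam1⁻¹ ^ m * ‖W22‖ ^ m * ‖e2‖ := by ring
  have hbot : Tendsto (fun m => (∑ k ∈ Finset.range m, f k) + ((lam1⁻¹ • W22) ^ m).mulVec e2)
      atTop (𝓝 (∑' k, f k)) := by
    simpa using hsum.add hrem
  simp only [key]
  rw [tendsto_pi_nhds]
  intro i
  cases i with
  | inl i => simp
  | inr i =>
    have h := tendsto_pi_nhds.mp hbot i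
    simpa using h
end
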